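/- arXiv:2406.07656 — 2 statements merged into one kernel-verified Lean document; each statement's English description precedes it below -/
import Mathlib

section
/- If φ ∈ H^∞(𝔻) is not univalent, then the analytic Toeplitz operator M_φ on H²(𝔻) does not have minimal commutant; equivalently, M_z* does not belong to the WOT-closure of the polynomials in M_φ*. -/
noncomputable section
open Complex Filter Topology

/-- The Hardy space `H²(𝔻)`, modelled as the Hilbert space of square-summable
Taylor coefficient sequences. -/
abbrev H2 : Type := lp (fun _ : ℕ => ℂ) 2

/-- The open unit disk `𝔻`. -/
def unitDisk : Set ℂ := Metric.ball 0 1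

/-- Evaluation of an element of `H²(𝔻)` at a point of the disk, via its Taylor series. -/
def ev (f : H2) (a : ℂ) : ℂ := ∑' n, f n * a ^ n

/-- `φ ∈ H^∞(𝔻)`: bounded analytic function on the unit disk. -/
def Hinf (φ : ℂ → ℂ) : Prop :=
  DifferentiableOn ℂ φ unitDisk ∧ ∃ C : ℝ, ∀ z ∈ unitDisk, ‖φ z‖ ≤ C

/-- `M` is the analytic Toeplitz (multiplication) operator `M_φ` with symbol `φ`. -/
def IsMulOp (φ : ℂ → ℂ) (M : H2 →L[ℂ] H2) : Prop :=
  ∀ (f : H2), ∀ a ∈ unitDisk, ev (M f) a = φ a * ev f a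

/-- The commutant of a bounded operator `T`. -/
def commutant {H : Type*} [NormedAddCommGroup H] [InnerProductSpace ℂ H]
    (T : H →L[ℂ] H) : Set (H →L[ℂ] H) :=
  {A | A ∘L T = T ∘L A}

/-- The double commutant of a bounded operator `T`. -/
def doubleCommutant {H : Type*} [NormedAddCommGroup H] [InnerProductSpace ℂ H]
    (T : H →L[ℂ] H) : Set (H →L[ℂ] H) :=
  {A | ∀ B ∈ commutant T, A ∘L B = B ∘L A}

/-- The unital algebra generated by `T`: all polynomials in `T`. -/
def polyAlg {H : Type*} [NormedAddCommGroup H] [InnerProductSpace ℂ H]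
    (T : H →L[ℂ] H) : Set (H →L[ℂ] H) :=
  {A | ∃ p : Polynomial ℂ, A = Polynomial.aeval T p}

/-- The closure of a set of operators in the weak operator topology. -/
def wotClosure {H : Type*} [NormedAddCommGroup H] [InnerProductSpace ℂ H]
    (S : Set (H →L[ℂ] H)) : Set (H →L[ℂ] H) :=
  (fun A : H →L[ℂ] H => ContinuousLinearMapWOT.ofCLM A) ⁻¹'
    (closure ((fun A : H →L[ℂ] H => ContinuousLinearMapWOT.ofCLM A) '' S))

section Aux

open scoped InnerProductSpace ComplexConjugate ENNReal

lemma norm_lt_one_of_mem_unitDisk {a : ℂ} (ha : a ∈ unitDisk) : ‖a‖ < 1 := by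
  simpa [unitDisk, Metric.mem_ball, dist_zero_right] using ha

lemma summable_ev (f : H2) {a : ℂ} (ha : a ∈ unitDisk) :
    Summable (fun n => f n * a ^ n) := by
  have hb : ∀ n : ℕ, ‖f n * a ^ n‖ ≤ ‖f‖ * ‖a‖ ^ n := by
    intro n
    rw [norm_mul, norm_pow]
    gcongr
    exact lp.norm_apply_le_norm (by norm_num) f n
  exact Summable.of_norm_bounded
    (((summable_geometric_of_lt_one (norm_nonneg a)
      (norm_lt_one_of_mem_unitDisk ha))).mul_left ‖f‖) hb

lemma ev_add {g h : H2} {a : ℂ} (ha : a ∈ unitDisk) :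
    ev (g + h) a = ev g a + ev h a := by
  unfold ev
  rw [← Summable.tsum_add (summable_ev g ha) (summable_ev h ha)]
  apply tsum_congr
  intro n
  rw [lp.coeFn_add, Pi.add_apply, add_mul]

lemma ev_sub {g h : H2} {a : ℂ} (ha : a ∈ unitDisk) :
    ev (g - h) a = ev g a - ev h a := by
  unfold ev
  rw [← Summable.tsum_sub (summable_ev g ha) (summable_ev h ha)]
  apply tsum_congr
  intro n
  rw [lp.coeFn_sub, Pi.sub_apply, sub_mul]

lemma ev_smul (c : ℂ) (g : H2) (a : ℂ) :
    ev (c • g) a = c * ev g a := by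
  unfold ev
  rw [← tsum_mul_left]
  apply tsum_congr
  intro n
  rw [lp.coeFn_smul, Pi.smul_apply, smul_eq_mul, mul_assoc]

/-- The constant function `1` as an element of `H²`. -/
def e0 : H2 := lp.single 2 0 1

lemma ev_e0 (a : ℂ) : ev e0 a = 1 := by
  unfold ev e0
  rw [tsum_eq_single 0]
  · simp [lp.single_apply_self]
  · intro n hn
    simp [lp.single_apply_ne _ _ _ hn, Pi.single_apply, hn]

/-- An element of `H²` whose power series vanishes identically on the disk is zero. -/
lemma eq_zero_of_ev_eq_zero {f : H2} (h : ∀ a ∈ unitDisk, ev f a = 0) : f = 0 := by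
  set p : FormalMultilinearSeries ℂ ℂ ℂ :=
    FormalMultilinearSeries.ofScalars ℂ (fun n => f n) with hp
  have hrad : (1 : ℝ≥0∞) ≤ p.radius := by
    have := FormalMultilinearSeries.le_radius_of_bound p ‖f‖ (r := 1) ?_
    · simpa using this
    · intro n
      simp only [hp, FormalMultilinearSeries.ofScalars_norm, NNReal.coe_one, one_pow, mul_one]
      exact lp.norm_apply_le_norm (by norm_num) f n
  have hpos : (0 : ℝ≥0∞) < p.radius := lt_of_lt_of_le zero_lt_one hrad
  have hat : HasFPowerSeriesAt p.sum p 0 :=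
    (p.hasFPowerSeriesOnBall hpos).hasFPowerSeriesAt
  have hev : p.sum =ᶠ[nhds 0] 0 := by
    filter_upwards [Metric.ball_mem_nhds (0 : ℂ) one_pos] with z hz
    have hsum : p.sum z = ev f z := by
      unfold FormalMultilinearSeries.sum ev
      apply tsum_congr
      intro n
      rw [hp, FormalMultilinearSeries.ofScalars_apply_eq, smul_eq_mul, mul_comm]
    rw [hsum, h z hz, Pi.zero_apply]
  have hp0 : p = 0 := hat.eq_zero_of_eventually hev
  have hf0 : (fun n => f n) = 0 := by
    rwa [hp, FormalMultilinearSeries.ofScalars_series_eq_zero] at hp0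
  ext n
  exact congrFun hf0 n

lemma ev_ext {g h : H2} (he : ∀ a ∈ unitDisk, ev g a = ev h a) : g = h := by
  have : g - h = 0 :=
    eq_zero_of_ev_eq_zero (fun a ha => by rw [ev_sub ha, he a ha, sub_self])
  exact sub_eq_zero.mp this

/-- The reproducing kernel at a point of the disk. -/
def kern {a : ℂ} (ha : a ∈ unitDisk) : H2 :=
  ⟨fun n => (conj a) ^ n, by
    apply memℓp_gen
    have hs : Summable (fun n : ℕ => (‖a‖ ^ 2) ^ n) := by
      have h1 := norm_lt_one_of_mem_unitDisk ha
      have h0 := norm_nonneg a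
      exact summable_geometric_of_lt_one (by positivity) (by nlinarith)
    have : (fun n : ℕ => ‖(conj a) ^ n‖ ^ (2 : ℝ≥0∞).toReal)
        = fun n : ℕ => (‖a‖ ^ 2) ^ n := by
      funext n
      have h2 : ((2 : ℝ≥0∞).toReal) = ((2 : ℕ) : ℝ) := by norm_num
      rw [h2, Real.rpow_natCast]
      rw [norm_pow, RCLike.norm_conj, ← pow_mul, ← pow_mul, Nat.mul_comm]
    rwa [this]⟩

lemma kern_apply {a : ℂ} (ha : a ∈ unitDisk) (n : ℕ) : kern ha n = (conj a) ^ n := rfl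

lemma inner_kern {a : ℂ} (ha : a ∈ unitDisk) (f : H2) : ⟪kern ha, f⟫_ℂ = ev f a := by
  rw [lp.inner_eq_tsum]
  apply tsum_congr
  intro n
  rw [kern_apply, RCLike.inner_apply, map_pow, Complex.conj_conj, mul_comm]

lemma inner_e0_left (f : H2) : ⟪e0, f⟫_ℂ = f 0 := by
  unfold e0
  rw [lp.inner_single_left, RCLike.inner_apply, map_one, mul_one]

lemma adjoint_kern {ψ : ℂ → ℂ} {M : H2 →L[ℂ] H2} (hM : IsMulOp ψ M)
    {a : ℂ} (ha : a ∈ unitDisk) :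
    ContinuousLinearMap.adjoint M (kern ha) = (conj (ψ a)) • kern ha := by
  apply ext_inner_right ℂ
  intro v
  rw [ContinuousLinearMap.adjoint_inner_left, inner_smul_left, inner_kern, inner_kern,
    hM v a ha, Complex.conj_conj]

lemma aeval_eigen {T : H2 →L[ℂ] H2} {x : H2} {μ : ℂ} (h : T x = μ • x) (p : Polynomial ℂ) :
    (Polynomial.aeval T p) x = Polynomial.eval μ p • x := by
  induction p using Polynomial.induction_on' with
  | add p q hp hq =>
    rw [map_add, ContinuousLinearMap.add_apply, hp, hq, Polynomial.eval_add, add_smul]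
  | monomial n c =>
    have hpow : ∀ k : ℕ, (T ^ k) x = μ ^ k • x := by
      intro k
      induction k with
      | zero => simp
      | succ k ih =>
        rw [pow_succ, ContinuousLinearMap.mul_apply, h, map_smul, ih, smul_smul, ← pow_succ']
    rw [Polynomial.aeval_monomial, ContinuousLinearMap.mul_apply, hpow n,
      Algebra.algebraMap_eq_smul_one, ContinuousLinearMap.smul_apply,
      ContinuousLinearMap.one_apply, smul_smul, Polynomial.eval_monomial]

lemma ev_pow_apply {φ : ℂ → ℂ} {M : H2 →L[ℂ] H2} (hM : IsMulOp φ M)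
    {a : ℂ} (ha : a ∈ unitDisk) (k : ℕ) (g : H2) :
    ev ((M ^ k) g) a = φ a ^ k * ev g a := by
  induction k generalizing g with
  | zero => simp
  | succ k ih =>
    rw [pow_succ, ContinuousLinearMap.mul_apply, ih (M g), hM g a ha, pow_succ]
    ring

lemma ev_aeval {φ : ℂ → ℂ} {M : H2 →L[ℂ] H2} (hM : IsMulOp φ M) (p : Polynomial ℂ) (f : H2)
    {a : ℂ} (ha : a ∈ unitDisk) :
    ev ((Polynomial.aeval M p) f) a = Polynomial.eval (φ a) p * ev f a := by
  induction p using Polynomial.induction_on' with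
  | add p q hp hq =>
    rw [map_add, ContinuousLinearMap.add_apply, ev_add ha, hp, hq, Polynomial.eval_add, add_mul]
  | monomial n c =>
    rw [Polynomial.aeval_monomial, ContinuousLinearMap.mul_apply,
      Algebra.algebraMap_eq_smul_one, ContinuousLinearMap.smul_apply,
      ContinuousLinearMap.one_apply, ev_smul, ev_pow_apply hM ha, Polynomial.eval_monomial]
    ring

lemma not_mem_wotClosure_of_sep {S : Set (H2 →L[ℂ] H2)} {x₁ x₂ y₁ y₂ : H2}
    (hS : ∀ A ∈ S, ⟪y₁, A x₁⟫_ℂ = ⟪y₂, A x₂⟫_ℂ) {B : H2 →L[ℂ] H2}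
    (hB : ⟪y₁, B x₁⟫_ℂ ≠ ⟪y₂, B x₂⟫_ℂ) : B ∉ wotClosure S := by
  intro hmem
  have hc1 : Continuous fun A : H2 →WOT[ℂ] H2 => ⟪y₁, A x₁⟫_ℂ := by
    have := ContinuousLinearMapWOT.continuous_dual_apply (σ := RingHom.id ℂ) (E := H2) (F := H2)
      x₁ (InnerProductSpace.toDual ℂ H2 y₁)
    simpa [InnerProductSpace.toDual_apply_apply] using this
  have hc2 : Continuous fun A : H2 →WOT[ℂ] H2 => ⟪y₂, A x₂⟫_ℂ := by
    have := ContinuousLinearMapWOT.continuous_dual_apply (σ := RingHom.id ℂ) (E := H2) (F := H2)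
      x₂ (InnerProductSpace.toDual ℂ H2 y₂)
    simpa [InnerProductSpace.toDual_apply_apply] using this
  have hclosed : IsClosed {A : H2 →WOT[ℂ] H2 | ⟪y₁, A x₁⟫_ℂ = ⟪y₂, A x₂⟫_ℂ} :=
    isClosed_eq hc1 hc2
  have hsub : (fun A : H2 →L[ℂ] H2 => ContinuousLinearMapWOT.ofCLM A) '' S
      ⊆ {A : H2 →WOT[ℂ] H2 | ⟪y₁, A x₁⟫_ℂ = ⟪y₂, A x₂⟫_ℂ} := by
    rintro _ ⟨A, hA, rfl⟩
    simpa [ContinuousLinearMapWOT.ofCLM_apply] using hS A hA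
  have hcl := closure_minimal hsub hclosed hmem
  exact hB (by simpa [ContinuousLinearMapWOT.ofCLM_apply] using hcl)

end Aux

open scoped InnerProductSpace ComplexConjugate

/-- If `φ ∈ H^∞(𝔻)` is not univalent, then `M_φ` does not have minimal commutant;
equivalently, `M_z*` does not belong to the WOT-closure of the polynomials in `M_φ*`. -/
theorem not_minimal_commutant_of_not_univalent
    (φ : ℂ → ℂ) (hφ : Hinf φ) (hnu : ¬ Set.InjOn φ unitDisk)
    (Mφ : H2 →L[ℂ] H2) (hM : IsMulOp φ Mφ)
    (Mz : H2 →L[ℂ] H2) (hMz : IsMulOp (fun z => z) Mz) :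
    wotClosure (polyAlg Mφ) ≠ commutant Mφ ∧
      ContinuousLinearMap.adjoint Mz ∉
        wotClosure (polyAlg (ContinuousLinearMap.adjoint Mφ)) := by
  rw [Set.InjOn] at hnu
  push_neg at hnu
  obtain ⟨a, ha, b, hb, hab, hne⟩ := hnu
  constructor
  · -- part 1
    have hMzNot : Mz ∉ wotClosure (polyAlg Mφ) := by
      apply not_mem_wotClosure_of_sep (x₁ := e0) (x₂ := e0) (y₁ := kern ha) (y₂ := kern hb)
      · rintro A ⟨p, rfl⟩
        rw [inner_kern ha, inner_kern hb, ev_aeval hM p e0 ha, ev_aeval hM p e0 hb,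
          ev_e0, ev_e0, hab]
      · rw [inner_kern ha, inner_kern hb, hMz e0 a ha, hMz e0 b hb, ev_e0, ev_e0,
          mul_one, mul_one]
        exact hne
    have hMzComm : Mz ∈ commutant Mφ := by
      show Mz ∘L Mφ = Mφ ∘L Mz
      refine ContinuousLinearMap.ext fun f => ?_
      rw [ContinuousLinearMap.comp_apply, ContinuousLinearMap.comp_apply]
      apply ev_ext
      intro c hc
      rw [hMz (Mφ f) c hc, hM f c hc, hM (Mz f) c hc, hMz f c hc]
      ring
    intro heq
    exact hMzNot (by rw [heq]; exact hMzComm)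
  · -- part 2
    apply not_mem_wotClosure_of_sep (x₁ := kern ha) (x₂ := kern hb) (y₁ := e0) (y₂ := e0)
    · rintro A ⟨p, rfl⟩
      rw [aeval_eigen (adjoint_kern hM ha) p, aeval_eigen (adjoint_kern hM hb) p,
        inner_smul_right, inner_smul_right, inner_e0_left, inner_e0_left,
        kern_apply, kern_apply, pow_zero, pow_zero, hab]
    · rw [adjoint_kern hMz ha, adjoint_kern hMz hb, inner_smul_right, inner_smul_right,
        inner_e0_left, inner_e0_left, kern_apply, kern_apply, pow_zero, pow_zero,
        mul_one, mul_one]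
      intro h
      exact hne ((starRingEnd ℂ).injective h)
end
end

section
/- Let φ ∈ H^∞(𝔻) singly cover a nonempty open set W ⊆ φ(𝔻), meaning φ maps some V ⊆ 𝔻 univalently onto W and φ^{-1}(W) = V. Then for each a ∈ V there exists c > 0 such that the function g(z) = (φ(z) − φ(a))/(z − a) satisfies |g(z)| > c for all z ∈ 𝔻; in particular g and 1/g are in H^∞(𝔻). -/
noncomputable section
open Complex Filter Topology

open Set in
lemma deriv_ne_zero_of_injOn {f : ℂ → ℂ} {V : Set ℂ} (hVo : IsOpen V) {a : ℂ} (haV : a ∈ V)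
    (hf : AnalyticAt ℂ f a) (hinj : Set.InjOn f V) : deriv f a ≠ 0 := by
  intro hd
  have hF : AnalyticAt ℂ (fun z => f z - f a) a := hf.sub analyticAt_const
  have hVn : V ∈ 𝓝 a := hVo.mem_nhds haV
  -- F is not eventually zero
  have hne : ¬ ∀ᶠ z in 𝓝 a, f z - f a = 0 := by
    intro hev
    obtain ⟨z, ⟨hz0, hzV⟩, hzne⟩ :=
      (((hev.and (hVo.eventually_mem haV)).filter_mono
          (nhdsWithin_le_nhds (s := {a}ᶜ))).and eventually_mem_nhdsWithin).exists
    have hzfa : f z = f a := by rwa [sub_eq_zero] at hz0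
    exact hzne (hinj hzV haV hzfa)
  have ho : analyticOrderAt (fun z => f z - f a) a ≠ ⊤ := fun h => hne (analyticOrderAt_eq_top.mp h)
  lift analyticOrderAt (fun z => f z - f a) a to ℕ using ho with n hn
  obtain ⟨g, hg, hga, hfg⟩ := (hF.analyticOrderAt_eq_natCast (n := n)).mp hn.symm
  simp only [smul_eq_mul] at hfg
  -- n ≠ 0
  have hn0 : n ≠ 0 := by
    intro h0
    have h00 := hfg.self_of_nhds
    rw [h0, sub_self, sub_self, pow_zero, one_mul] at h00
    exact hga h00.symm
  -- n ≠ 1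
  have hn1 : n ≠ 1 := by
    intro h1
    subst h1
    have hder : HasDerivAt (fun z => (z - a) ^ 1 * g z) (g a) a := by
      have h1' : HasDerivAt (fun z : ℂ => z - a) 1 a := (hasDerivAt_id a).sub_const a
      have h2' := h1'.mul hg.differentiableAt.hasDerivAt
      simp only [pow_one]
      rw [show g a = 1 * g a + (a - a) * deriv g a by simp]
      exact h2'
    have hdF : deriv (fun z => f z - f a) a = g a := Filter.EventuallyEq.deriv_eq hfg ▸ hder.deriv
    rw [deriv_sub_const (f a), hd] at hdF
    exact hga hdF.symm
  have hn2 : 2 ≤ n := by omega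
  have hnC : (n : ℂ) ≠ 0 := Nat.cast_ne_zero.mpr hn0
  have hnR : (n : ℝ) ≠ 0 := Nat.cast_ne_zero.mpr hn0
  -- n-th root of g
  set c : ℂ := (g a) ^ ((n : ℂ)⁻¹) with hcdef
  have hc : c ^ n = g a := Complex.cpow_nat_inv_pow _ hn0
  have hcne : c ≠ 0 := fun h => hga (by rw [← hc, h, zero_pow hn0])
  set h : ℂ → ℂ := fun z => c * Complex.exp (Complex.log (g z / g a) / n) with hhdef
  have hq : AnalyticAt ℂ (fun z => g z / g a) a := hg.div analyticAt_const hga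
  have hqa : g a / g a = 1 := div_self hga
  have hh : AnalyticAt ℂ h a := by
    apply analyticAt_const.mul
    apply analyticAt_cexp.comp
    apply AnalyticAt.div _ analyticAt_const hnC
    exact (analyticAt_clog (by rw [hqa]; exact Complex.one_mem_slitPlane)).comp hq
  have hha : h a = c := by simp [hhdef, hqa, Complex.log_one]
  have hhan : h a ≠ 0 := by rw [hha]; exact hcne
  have hhn : ∀ᶠ z in 𝓝 a, h z ^ n = g z := by
    filter_upwards [hg.continuousAt.eventually_ne hga] with z hz
    have hz' : g z / g a ≠ 0 := div_ne_zero hz hga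
    calc (c * Complex.exp (Complex.log (g z / g a) / n)) ^ n
        = c ^ n * Complex.exp ((n : ℂ) * (Complex.log (g z / g a) / n)) := by
          rw [mul_pow, Complex.exp_nat_mul]
      _ = g a * (g z / g a) := by
          rw [hc, mul_div_cancel₀ _ hnC, Complex.exp_log hz']
      _ = g z := by field_simp
  -- the local chart ψ
  set ψ : ℂ → ℂ := fun z => (z - a) * h z with hψdef
  have hψ : AnalyticAt ℂ ψ a := (analyticAt_id.sub analyticAt_const).mul hh
  have hψa : ψ a = 0 := by simp [hψdef]
  have hψd : HasDerivAt ψ (h a) a := by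
    have h1' : HasDerivAt (fun z : ℂ => z - a) 1 a := (hasDerivAt_id a).sub_const a
    have h2' := h1'.mul hh.differentiableAt.hasDerivAt
    rw [show h a = 1 * h a + (a - a) * deriv h a by simp]
    exact h2'
  have hψs : HasStrictDerivAt ψ (h a) a := by
    obtain ⟨p, hp⟩ := hψ
    have hs := hp.hasStrictDerivAt
    have := hs.hasDerivAt.unique hψd
    rwa [this] at hs
  set ι : ℂ → ℂ := HasStrictDerivAt.localInverse ψ (h a) a hψs hhan with hιdef
  have hright : ∀ᶠ w in 𝓝 (ψ a), ψ (ι w) = w :=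
    (hψs.hasStrictFDerivAt_equiv hhan).eventually_right_inverse
  have hιa : ι (ψ a) = a := (hψs.hasStrictFDerivAt_equiv hhan).localInverse_apply_image
  have hιt : Tendsto ι (𝓝 (ψ a)) (𝓝 a) := by
    have h' := HasStrictFDerivAt.continuousAt (hψs.to_localInverse hhan)
    rw [← hιdef] at h'
    rwa [ContinuousAt, hιa] at h'
  have hE : ∀ᶠ z in 𝓝 a, z ∈ V ∧ (f z - f a = (z - a) ^ n * g z) ∧ h z ^ n = g z :=
    (hVo.eventually_mem haV).and (hfg.and hhn)
  have hQ : ∀ᶠ w in 𝓝 (ψ a), ψ (ι w) = w ∧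
      (ι w ∈ V ∧ (f (ι w) - f a = (ι w - a) ^ n * g (ι w)) ∧ h (ι w) ^ n = g (ι w)) :=
    hright.and (hιt.eventually hE)
  rw [hψa] at hQ
  obtain ⟨ε, hε, hball⟩ := Metric.eventually_nhds_iff.mp hQ
  -- two distinct points with the same image
  set θ : ℝ := 2 * Real.pi / n with hθdef
  set ω : ℂ := Complex.exp (θ * I) with hωdef
  have hθpos : 0 < θ := by
    rw [hθdef]
    have : (0:ℝ) < n := by positivity
    positivity
  have hθle : θ ≤ Real.pi := by
    rw [hθdef]
    rw [div_le_iff₀ (by positivity)]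
    have : (2:ℝ) ≤ n := by exact_mod_cast hn2
    nlinarith [Real.pi_pos]
  have hωn : ω ^ n = 1 := by
    rw [hωdef, ← Complex.exp_nat_mul]
    have : (n : ℂ) * (θ * I) = 2 * Real.pi * I := by
      rw [hθdef]
      push_cast
      field_simp
    rw [this, Complex.exp_two_pi_mul_I]
  have hω1 : ω ≠ 1 := by
    intro hcon
    have hre : Real.cos θ = 1 := by
      have := congrArg Complex.re hcon
      rwa [hωdef, Complex.exp_ofReal_mul_I_re, Complex.one_re] at this
    have := (Real.cos_eq_one_iff_of_lt_of_lt
      (by linarith [Real.pi_pos]) (by linarith [Real.pi_pos])).mp hre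
    linarith
  have hωnorm : ‖ω‖ = 1 := by
    rw [hωdef, Complex.norm_exp_ofReal_mul_I]
  set w₁ : ℂ := ((ε / 2 : ℝ) : ℂ) with hw1def
  set w₂ : ℂ := w₁ * ω with hw2def
  have hw1ne : w₁ ≠ 0 := Complex.ofReal_ne_zero.mpr (by positivity)
  have hd1 : dist w₁ 0 < ε := by
    rw [dist_zero_right, hw1def, Complex.norm_real, Real.norm_eq_abs,
      abs_of_pos (by positivity)]
    linarith
  have hd2 : dist w₂ 0 < ε := by
    rw [dist_zero_right, hw2def, norm_mul, hωnorm, mul_one, ← dist_zero_right]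
    exact hd1
  obtain ⟨hr1, hV1, he1, hh1⟩ := hball hd1
  obtain ⟨hr2, hV2, he2, hh2⟩ := hball hd2
  have e1 : f (ι w₁) - f a = w₁ ^ n := by
    rw [he1, ← hh1, ← mul_pow]
    conv_rhs => rw [← hr1]
  have e2 : f (ι w₂) - f a = w₂ ^ n := by
    rw [he2, ← hh2, ← mul_pow]
    conv_rhs => rw [← hr2]
  have him : f (ι w₁) = f (ι w₂) := by
    have hpow : w₂ ^ n = w₁ ^ n := by rw [hw2def, mul_pow, hωn, mul_one]
    have h'' : f (ι w₁) - f a = f (ι w₂) - f a := by rw [e1, e2, hpow]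
    exact sub_left_inj.mp h''
  have heq : ι w₁ = ι w₂ := hinj hV1 hV2 him
  have hw12 : w₁ = w₂ := by rw [← hr1, ← hr2, heq]
  have : ω = 1 := by
    have := hw12
    rw [hw2def] at this
    exact (mul_left_cancel₀ hw1ne (by rw [mul_one]; exact this)).symm
  exact hω1 this

open Set in
theorem difference_quotient_bounded_below_of_singly_covers'
    (φ : ℂ → ℂ) (unitDisk : Set ℂ) (hUD : unitDisk = Metric.ball 0 1)
    (hφ : DifferentiableOn ℂ φ unitDisk ∧ ∃ C : ℝ, ∀ z ∈ unitDisk, ‖φ z‖ ≤ C)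
    (W V : Set ℂ)
    (hWopen : IsOpen W)
    (hV : V ⊆ unitDisk) (hinj : Set.InjOn φ V) (himg : φ '' V = W)
    (hpre : unitDisk ∩ φ ⁻¹' W = V)
    (a : ℂ) (ha : a ∈ V)
    (key : deriv φ a ≠ 0) :
    ∃ g : ℂ → ℂ, DifferentiableOn ℂ g unitDisk ∧
      (∀ z ∈ unitDisk, φ z - φ a = (z - a) * g z) ∧
      (∃ c > (0:ℝ), ∀ z ∈ unitDisk, c < ‖g z‖) ∧
      (DifferentiableOn ℂ g unitDisk ∧ ∃ C : ℝ, ∀ z ∈ unitDisk, ‖g z‖ ≤ C) ∧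
      (DifferentiableOn ℂ (fun z => (g z)⁻¹) unitDisk ∧
        ∃ C : ℝ, ∀ z ∈ unitDisk, ‖(g z)⁻¹‖ ≤ C) := by
  have hdisk : IsOpen unitDisk := hUD ▸ Metric.isOpen_ball
  have haD : a ∈ unitDisk := hV ha
  have hVo : IsOpen V := by
    rw [← hpre]
    exact hφ.1.continuousOn.isOpen_inter_preimage hdisk hWopen
  have hfa : AnalyticAt ℂ φ a := hφ.1.analyticAt (hdisk.mem_nhds haD)
  set g := dslope φ a with hgdef
  have hgdiff : DifferentiableOn ℂ g unitDisk := by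
    intro x hx
    rcases eq_or_ne x a with rfl | hne
    · obtain ⟨p, hp⟩ := hfa
      exact hp.has_fpower_series_dslope_fslope.analyticAt.differentiableAt.differentiableWithinAt
    · exact (differentiableWithinAt_dslope_of_ne hne).mpr (hφ.1 x hx)
  have hid : ∀ z ∈ unitDisk, φ z - φ a = (z - a) * g z := by
    intro z _
    have := sub_smul_dslope φ a z
    rw [smul_eq_mul] at this
    exact this.symm
  have hφne : ∀ z ∈ unitDisk, z ≠ a → φ z ≠ φ a := by
    intro z hz hne hEq
    have hW : φ z ∈ W := by rw [hEq, ← himg]; exact ⟨a, ha, rfl⟩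
    have hzV : z ∈ V := by rw [← hpre]; exact ⟨hz, hW⟩
    exact hne (hinj hzV ha hEq)
  have hga : g a ≠ 0 := by rw [hgdef, dslope_same]; exact key
  have hgne : ∀ z ∈ unitDisk, g z ≠ 0 := by
    intro z hz h0
    rcases eq_or_ne z a with rfl | hne
    · exact hga h0
    · have h1 := hid z hz
      rw [h0, mul_zero] at h1
      exact hφne z hz hne (sub_eq_zero.mp h1)
  have hquot : ∀ z : ℂ, z ≠ a → ‖g z‖ = ‖z - a‖⁻¹ * ‖φ z - φ a‖ := by
    intro z hne
    rw [hgdef, dslope_of_ne _ hne, slope_def_field]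
    rw [div_eq_inv_mul, norm_mul, norm_inv]
  have hgc : ContinuousAt g a :=
    (hgdiff.differentiableAt (hdisk.mem_nhds haD)).continuousAt
  have hhalf : (0:ℝ) < ‖g a‖ / 2 := by
    have := norm_pos_iff.mpr hga
    linarith
  have h1 : ∀ᶠ z in 𝓝 a, ‖g a‖ / 2 < ‖g z‖ :=
    hgc.norm.eventually (lt_mem_nhds (by linarith [norm_pos_iff.mpr hga]))
  obtain ⟨δ, hδ, hballV⟩ := Metric.eventually_nhds_iff.mp
    ((hVo.eventually_mem ha).and h1)
  have hnotconst : ¬ ∀ᶠ z in 𝓝 a, φ z = φ a := by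
    intro hev
    obtain ⟨z, ⟨hzeq, hzV⟩, hzne⟩ :=
      (((hev.and (hVo.eventually_mem ha)).filter_mono
        (nhdsWithin_le_nhds (s := {a}ᶜ))).and eventually_mem_nhdsWithin).exists
    exact hzne (hinj hzV ha hzeq)
  have hmap : 𝓝 (φ a) ≤ map φ (𝓝 a) :=
    hfa.eventually_constant_or_nhds_le_map_nhds_aux.resolve_left hnotconst
  have himgnhds : φ '' (Metric.ball a δ) ∈ 𝓝 (φ a) :=
    hmap (image_mem_map (Metric.ball_mem_nhds a hδ))
  obtain ⟨ε, hε, hballsub⟩ := Metric.nhds_basis_ball.mem_iff.mp himgnhds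
  have hfar : ∀ z ∈ unitDisk, δ ≤ dist z a → ε ≤ ‖φ z - φ a‖ := by
    intro z hz hdist
    by_contra hlt
    push_neg at hlt
    have hmem : φ z ∈ Metric.ball (φ a) ε := by rwa [Metric.mem_ball, dist_eq_norm]
    obtain ⟨w, hw, hwz⟩ := hballsub hmem
    have hwV : w ∈ V := (hballV (by rwa [Metric.mem_ball] at hw)).1
    have hzW : φ z ∈ W := by rw [← himg]; exact ⟨w, hwV, hwz⟩
    have hzV : z ∈ V := by rw [← hpre]; exact ⟨hz, hzW⟩
    have hwzeq : w = z := hinj hwV hzV hwz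
    rw [hwzeq, Metric.mem_ball] at hw
    linarith
  -- the lower bound
  set c0 : ℝ := min (‖g a‖ / 2) (ε / 2) with hc0def
  have hc0pos : 0 < c0 := lt_min hhalf (by positivity)
  have hbound : ∀ z ∈ unitDisk, c0 < ‖g z‖ := by
    intro z hz
    rcases lt_or_ge (dist z a) δ with h | h
    · exact lt_of_le_of_lt (min_le_left _ _) (hballV h).2
    · have hεle := hfar z hz h
      have hzne : z ≠ a := by
        intro hzz
        rw [hzz, dist_self] at h
        linarith
      have hza : 0 < ‖z - a‖ := by
        rw [norm_pos_iff, sub_ne_zero]; exact hzne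
      have hza2 : ‖z - a‖ < 2 := by
        have hz1 : ‖z‖ < 1 := by
          rw [hUD, Metric.mem_ball, dist_zero_right] at hz; exact hz
        have ha1 : ‖a‖ < 1 := by
          have := hV ha
          rw [hUD, Metric.mem_ball, dist_zero_right] at this; exact this
        calc ‖z - a‖ ≤ ‖z‖ + ‖a‖ := norm_sub_le _ _
          _ < 2 := by linarith
      have key2 : ε / 2 < ‖g z‖ := by
        rw [hquot z hzne]
        have h2 : ε / 2 < ε / ‖z - a‖ := div_lt_div_of_pos_left hε hza hza2
        have h3 : ε / ‖z - a‖ ≤ ‖φ z - φ a‖ / ‖z - a‖ := by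
          have := dist_eq_norm z a ▸ h
          gcongr
        calc ε / 2 < ε / ‖z - a‖ := h2
          _ ≤ ‖φ z - φ a‖ / ‖z - a‖ := h3
          _ = ‖z - a‖⁻¹ * ‖φ z - φ a‖ := by rw [div_eq_inv_mul]
      exact lt_of_le_of_lt (min_le_right _ _) key2
  -- boundedness of g
  obtain ⟨C, hC⟩ := hφ.2
  have hgbdd : ∃ C : ℝ, ∀ z ∈ unitDisk, ‖g z‖ ≤ C := by
    set C' := max C 0 with hC'def
    have hC'0 : 0 ≤ C' := le_max_right _ _
    have hC' : ∀ z ∈ unitDisk, ‖φ z‖ ≤ C' := fun z hz => (hC z hz).trans (le_max_left _ _)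
    obtain ⟨ρ, hρ, hρsub⟩ := Metric.nhds_basis_closedBall.mem_iff.mp (hdisk.mem_nhds haD)
    have hcontg : ContinuousOn g (Metric.closedBall a ρ) := hgdiff.continuousOn.mono hρsub
    obtain ⟨C1, hC1⟩ := (isCompact_closedBall a ρ).exists_bound_of_continuousOn hcontg
    refine ⟨max C1 (2 * C' / ρ), fun z hz => ?_⟩
    rcases le_or_gt (dist z a) ρ with h | h
    · exact (hC1 z (Metric.mem_closedBall.mpr h)).trans (le_max_left _ _)
    · have hzne : z ≠ a := by
        intro hzz
        rw [hzz, dist_self] at h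
        linarith
      have hza : ρ ≤ ‖z - a‖ := by rw [← dist_eq_norm]; exact h.le
      have hnum : ‖φ z - φ a‖ ≤ 2 * C' :=
        (norm_sub_le _ _).trans (by linarith [hC' z hz, hC' a haD])
      have : ‖g z‖ ≤ 2 * C' / ρ := by
        rw [hquot z hzne, ← div_eq_inv_mul]
        exact div_le_div₀ (by linarith) hnum hρ hza
      exact this.trans (le_max_right _ _)
  refine ⟨g, hgdiff, hid, ⟨c0, hc0pos, hbound⟩, ⟨hgdiff, hgbdd⟩, ?_, ⟨c0⁻¹, ?_⟩⟩
  · exact hgdiff.inv hgne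
  · intro z hz
    rw [norm_inv]
    exact inv_anti₀ hc0pos (hbound z hz).le

/-- If `φ ∈ H^∞(𝔻)` singly covers a nonempty open set `W ⊆ φ(𝔻)` (it maps `V ⊆ 𝔻`
univalently onto `W` and `φ⁻¹(W) ∩ 𝔻 = V`), then for each `a ∈ V` the difference quotient
`g(z) = (φ(z) − φ(a))/(z − a)` is bounded below in modulus on `𝔻`; in particular, both
`g` and `1/g` belong to `H^∞(𝔻)`. -/
theorem difference_quotient_bounded_below_of_singly_covers
    (φ : ℂ → ℂ) (hφ : Hinf φ) (W V : Set ℂ)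
    (hWopen : IsOpen W) (hWne : W.Nonempty) (hWsub : W ⊆ φ '' unitDisk)
    (hV : V ⊆ unitDisk) (hinj : Set.InjOn φ V) (himg : φ '' V = W)
    (hpre : unitDisk ∩ φ ⁻¹' W = V)
    (a : ℂ) (ha : a ∈ V) :
    ∃ g : ℂ → ℂ, DifferentiableOn ℂ g unitDisk ∧
      (∀ z ∈ unitDisk, φ z - φ a = (z - a) * g z) ∧
      (∃ c > (0:ℝ), ∀ z ∈ unitDisk, c < ‖g z‖) ∧
      Hinf g ∧ Hinf (fun z => (g z)⁻¹) := by
  have hdisk : IsOpen unitDisk := Metric.isOpen_ball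
  have hVo : IsOpen V := by
    rw [← hpre]
    exact hφ.1.continuousOn.isOpen_inter_preimage hdisk hWopen
  have hfa : AnalyticAt ℂ φ a := hφ.1.analyticAt (hdisk.mem_nhds (hV ha))
  obtain ⟨g, h1, h2, h3, h4, h5⟩ :=
    difference_quotient_bounded_below_of_singly_covers' φ unitDisk rfl hφ W V hWopen
      hV hinj himg hpre a ha (deriv_ne_zero_of_injOn hVo ha hfa hinj)
  exact ⟨g, h1, h2, h3, h4, h5⟩
end
end
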